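/- Let θ ∈ [0, π] and let P ⊂ ℂ² be the real 2-plane defined by y₂ = 0 and cos(θ)·y₁ + sin(θ)·x₂ = 0. Then the complex line D_λ = {y = λx} with λ = λ₁ + iλ₂ is not transverse to P if and only if cos(θ)·|λ|² = sin(θ)·λ₂. In particular, for θ ∈ (0, π/2), the set of such λ in ℂ is the Euclidean circle centered at (0, tan(θ)/2) of radius tan(θ)/2. -/

import Mathlib

/-- The complex line `{y = l·x}` through the origin, as a real subspace of ℂ². -/
noncomputable def lineSlope (l : ℂ) : Submodule ℝ (ℂ × ℂ) where
  carrier := {v | v.2 = l * v.1}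
  add_mem' := by
    intro a b ha hb
    simp only [Set.mem_setOf_eq, Prod.fst_add, Prod.snd_add] at *
    rw [ha, hb]; ring
  zero_mem' := by simp
  smul_mem' := by
    intro r v hv
    simp only [Set.mem_setOf_eq, Prod.smul_fst, Prod.smul_snd, Complex.real_smul] at *
    rw [hv]; ring

lemma mem_lineSlope (l : ℂ) (v : ℂ × ℂ) : v ∈ lineSlope l ↔ v.2 = l * v.1 :=
  Iff.rfl

/-- If a nontrivial linear functional `k·(sinθ·x₂ + cosθ·y₁) + D·y₂` kills both
`lineSlope l` and `P`, and the sup is top, then it kills everything. -/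
lemma stmt5_aux (θ : ℝ) (P : Submodule ℝ (ℂ × ℂ))
    (hP : ∀ v : ℂ × ℂ, v ∈ P ↔
      (v.2.im = 0 ∧ Real.cos θ * v.2.re + Real.sin θ * v.1.im = 0))
    (l : ℂ) (k D : ℝ)
    (h1 : k * Real.cos θ * l.re + D * l.im = 0)
    (h2 : k * (Real.sin θ - Real.cos θ * l.im) + D * l.re = 0)
    (htop : lineSlope l ⊔ P = ⊤) (v : ℂ × ℂ) :
    k * (Real.sin θ * v.1.im + Real.cos θ * v.2.re) + D * v.2.im = 0 := by
  have hv : v ∈ lineSlope l ⊔ P := htop ▸ Submodule.mem_top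
  obtain ⟨u, hu, p, hp, hup⟩ := Submodule.mem_sup.1 hv
  obtain ⟨hp1, hp2⟩ := (hP p).1 hp
  have hu' : u.2 = l * u.1 := hu
  have e1 : v.1.im = u.1.im + p.1.im := by rw [← hup]; simp
  have e2 : v.2.re = (l * u.1).re + p.2.re := by rw [← hup, ← hu']; simp
  have e3 : v.2.im = (l * u.1).im + p.2.im := by rw [← hup, ← hu']; simp
  rw [e1, e2, e3, Complex.mul_re, Complex.mul_im]
  linear_combination u.1.re * h1 + u.1.im * h2 + k * hp2 + D * hp1

theorem stmt_5 (θ : ℝ) (hθ : θ ∈ Set.Icc 0 Real.pi)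
    (P : Submodule ℝ (ℂ × ℂ))
    (hP : ∀ v : ℂ × ℂ, v ∈ P ↔
      (v.2.im = 0 ∧ Real.cos θ * v.2.re + Real.sin θ * v.1.im = 0)) :
    (∀ l : ℂ, lineSlope l ⊔ P ≠ ⊤ ↔
      Real.cos θ * Complex.normSq l = Real.sin θ * l.im) ∧
    (θ ∈ Set.Ioo 0 (Real.pi / 2) →
      {l : ℂ | lineSlope l ⊔ P ≠ ⊤} =
        Metric.sphere (Complex.I * (Real.tan θ / 2)) (Real.tan θ / 2)) := by
  have key : ∀ l : ℂ, lineSlope l ⊔ P ≠ ⊤ ↔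
      Real.cos θ * Complex.normSq l = Real.sin θ * l.im := by
    intro l
    constructor
    · -- contrapositive: if the equation fails, the sup is top
      intro hne
      by_contra hcond
      apply hne
      rw [eq_top_iff]
      rintro ⟨a, b⟩ -
      have hΔ : Real.sin θ * l.im - Real.cos θ * (l.re ^ 2 + l.im ^ 2) ≠ 0 := by
        intro h
        apply hcond
        rw [Complex.normSq_apply]
        nlinarith [h]
      set Δ := Real.sin θ * l.im - Real.cos θ * (l.re ^ 2 + l.im ^ 2) with hΔdef
      set R := Real.cos θ * b.re + Real.sin θ * a.im with hR
      set x : ℂ := ⟨(b.im * (Real.sin θ - Real.cos θ * l.im) - l.re * R) / Δ,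
                    (l.im * R - Real.cos θ * l.re * b.im) / Δ⟩ with hx
      refine Submodule.mem_sup.2 ⟨(x, l * x), rfl, (a - x, b - l * x), ?_, ?_⟩
      · rw [hP]
        constructor
        · simp only [Complex.sub_im, Complex.mul_im, hx]
          field_simp
          ring
        · simp only [Complex.sub_re, Complex.sub_im, Complex.mul_re, hx]
          field_simp
          ring
      · ext <;> simp
    · -- if the equation holds, the sup is not top
      intro hcond htop
      rcases eq_or_ne l.im 0 with him | him
      · rcases eq_or_ne l.re 0 with hre | hre
        · -- l = 0 : use functional y₂ (k = 0, D = 1)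
          have := stmt5_aux θ P hP l 0 1 (by simp [him]) (by simp [hre]) htop (0, Complex.I)
          simp at this
        · -- l.im = 0, l.re ≠ 0 : k = l.re, D = -sin θ
          have h1 : l.re * Real.cos θ * l.re + (-Real.sin θ) * l.im = 0 := by
            have : Real.cos θ * Complex.normSq l = Real.sin θ * l.im := hcond
            rw [Complex.normSq_apply] at this
            linear_combination this - Real.cos θ * l.im * him
          have h2 : l.re * (Real.sin θ - Real.cos θ * l.im) + (-Real.sin θ) * l.re = 0 := by
            rw [him]; ring
          have := stmt5_aux θ P hP l l.re (-Real.sin θ) h1 h2 htop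
            (Complex.I * Real.sin θ, (Real.cos θ : ℂ))
          simp only [Complex.mul_im, Complex.I_re, Complex.I_im, Complex.ofReal_re,
            Complex.ofReal_im, Complex.ofReal_re] at this
          have hsc : Real.sin θ ^ 2 + Real.cos θ ^ 2 = 1 := Real.sin_sq_add_cos_sq θ
          apply hre
          nlinarith [this, hsc]
      · -- l.im ≠ 0 : k = l.im, D = -cos θ · l.re
        have h1 : l.im * Real.cos θ * l.re + (-(Real.cos θ * l.re)) * l.im = 0 := by ring
        have h2 : l.im * (Real.sin θ - Real.cos θ * l.im) +
            (-(Real.cos θ * l.re)) * l.re = 0 := by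
          have := hcond
          rw [Complex.normSq_apply] at this
          nlinarith [this]
        have := stmt5_aux θ P hP l l.im (-(Real.cos θ * l.re)) h1 h2 htop
          (Complex.I * Real.sin θ, (Real.cos θ : ℂ))
        simp only [Complex.mul_im, Complex.I_re, Complex.I_im, Complex.ofReal_re,
          Complex.ofReal_im] at this
        have hsc : Real.sin θ ^ 2 + Real.cos θ ^ 2 = 1 := Real.sin_sq_add_cos_sq θ
        apply him
        nlinarith [this, hsc]
  refine ⟨key, ?_⟩
  intro hθ'
  have hc : Real.cos θ > 0 := Real.cos_pos_of_mem_Ioo ⟨by linarith [hθ'.1, Real.pi_pos], hθ'.2⟩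
  have hs : Real.sin θ > 0 := Real.sin_pos_of_pos_of_lt_pi hθ'.1
    (by linarith [hθ'.2, Real.pi_pos])
  have ht : Real.tan θ = Real.sin θ / Real.cos θ := Real.tan_eq_sin_div_cos θ
  have htpos : Real.tan θ > 0 := by rw [ht]; positivity
  ext l
  rw [Set.mem_setOf_eq, key l, Metric.mem_sphere, Complex.dist_eq]
  set t := Real.tan θ / 2 with htdef
  have htnn : 0 ≤ t := by positivity
  have habs : ‖l - Complex.I * t‖ = t ↔
      Complex.normSq (l - Complex.I * t) = t ^ 2 := by
    rw [← Complex.sq_norm]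
    constructor
    · intro h; rw [h]
    · intro h
      rw [← Real.sqrt_sq (norm_nonneg (l - Complex.I * t)), h, Real.sqrt_sq htnn]
  have hcast : Complex.I * ((Real.tan θ : ℂ) / 2) = Complex.I * (t : ℂ) := by
    rw [htdef]; push_cast; ring
  rw [hcast, habs]
  have h2t : 2 * t * Real.cos θ = Real.sin θ := by
    rw [htdef, ht]; field_simp
  have hcne : Real.cos θ ≠ 0 := ne_of_gt hc
  rw [Complex.normSq_apply, Complex.normSq_apply]
  simp only [Complex.sub_re, Complex.sub_im, Complex.mul_re, Complex.mul_im,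
    Complex.I_re, Complex.I_im, Complex.ofReal_re, Complex.ofReal_im]
  constructor
  · intro h
    nlinarith [h, h2t]
  · intro h
    nlinarith [h, h2t, hc]
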